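/- For every 1 ≤ j ≤ d one has ∑_{k=1}^d γ_k/(v_j·v_k − 1) = δ^{-1}·ϱ + 1/(v_j² − 1). -/

import Mathlib

open Polynomial Finset

lemma aux_odd_pow {R : Type*} [CommRing R] {k : ℕ} (hk : Odd k) :
    (X ^ 2 - 1 : R[X]) ∣ X ^ k - X := by
  obtain ⟨m, rfl⟩ := hk
  have h : (X ^ 2 - 1 : R[X]) ∣ (X ^ 2) ^ m - 1 ^ m := sub_dvd_pow_sub_pow _ _ m
  simp only [one_pow] at h
  have : (X ^ (2 * m + 1) - X : R[X]) = ((X ^ 2) ^ m - 1) * X := by ring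
  rw [this]
  exact h.mul_right X

lemma aux_prod_dvd {F : Type*} [Field F] {ι : Type*} [DecidableEq ι] (T : Finset ι) (v : ι → F) :
    (X ^ 2 - 1 : F[X]) ∣
      X ^ T.card * ∏ l ∈ T, (X - C (v l)) - (-1) ^ T.card * ∏ l ∈ T, (C (v l) * X - 1) := by
  induction T using Finset.induction_on with
  | empty => simp
  | insert a T ha ih =>
    rw [Finset.prod_insert ha, Finset.prod_insert ha, Finset.card_insert_of_notMem ha]
    have key : X ^ (T.card + 1) * ((X - C (v a)) * ∏ l ∈ T, (X - C (v l)))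
          - (-1) ^ (T.card + 1) * ((C (v a) * X - 1) * ∏ l ∈ T, (C (v l) * X - 1))
        = (X ^ 2 - 1) * (X ^ T.card * ∏ l ∈ T, (X - C (v l)))
          - (C (v a) * X - 1) *
            (X ^ T.card * ∏ l ∈ T, (X - C (v l)) - (-1) ^ T.card * ∏ l ∈ T, (C (v l) * X - 1)) := by
      ring
    rw [key]
    exact dvd_sub (dvd_mul_right _ _) (ih.mul_left _)

lemma aux_E {F : Type*} [Field F] (w r : F) (hw : w ^ 2 - 1 ≠ 0) :
    (X : F[X]) + (X - C w) *
        (C (r + (w ^ 2 - 1)⁻¹) * X ^ 2 + C (w * (w ^ 2 - 1)⁻¹) * X + C (-r))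
      = (X ^ 2 - 1) *
        (C (r + (w ^ 2 - 1)⁻¹) * X + C (w * (w ^ 2 - 1)⁻¹ - w * (r + (w ^ 2 - 1)⁻¹))) := by
  have hs : w ^ 2 * (w ^ 2 - 1)⁻¹ - (w ^ 2 - 1)⁻¹ = 1 := by
    have h := mul_inv_cancel₀ hw
    linear_combination h
  have hC : (C w) ^ 2 * C ((w ^ 2 - 1)⁻¹) - C ((w ^ 2 - 1)⁻¹) = (1 : F[X]) := by
    rw [← C_pow, ← C_mul, ← C_sub, hs, C_1]
  simp only [C_add, C_mul, C_neg, C_sub]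
  linear_combination (-(X : F[X])) * hC

lemma lag_coeff {F : Type*} [Field F] {ι : Type*} [DecidableEq ι] {s : Finset ι} {v : ι → F}
    (hvs : Set.InjOn v s) {P : F[X]} (hdeg : P.degree < s.card) :
    P.coeff (s.card - 1) = ∑ i ∈ s, P.eval (v i) * (∏ l ∈ s.erase i, (v i - v l))⁻¹ := by
  conv_lhs => rw [Lagrange.eq_interpolate hvs hdeg]
  rw [Lagrange.interpolate_apply, finset_sum_coeff]
  refine Finset.sum_congr rfl fun i hi => ?_
  rw [coeff_C_mul]
  congr 1
  have hmon : (∏ l ∈ s.erase i, (X - C (v l))).Monic :=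
    monic_prod_of_monic _ _ fun _ _ => monic_X_sub_C _
  have hnd : (∏ l ∈ s.erase i, (X - C (v l))).natDegree = s.card - 1 := by
    rw [natDegree_prod_of_monic _ _ fun _ _ => monic_X_sub_C _]
    simp [Finset.card_erase_of_mem hi]
  have hb : Lagrange.basis s v i
      = C (∏ l ∈ s.erase i, (v i - v l))⁻¹ * ∏ l ∈ s.erase i, (X - C (v l)) := by
    rw [Lagrange.basis]
    simp_rw [Lagrange.basisDivisor]
    rw [Finset.prod_mul_distrib, ← map_prod, Finset.prod_inv_distrib]
  rw [hb, coeff_C_mul, ← hnd, hmon.coeff_natDegree, mul_one]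

lemma core {F : Type*} [Field F] {d : ℕ} (ρ : F) (v : Fin d → F) (hv0 : ∀ i, v i ≠ 0)
    (hvinj : Function.Injective v) (hv1 : ∀ i j, v i * v j ≠ 1)
    (γs : F → F) (γp : F[X]) (hdeg : γp.natDegree ≤ 2)
    (heval : ∀ x, γp.eval x = γs x * x) (j : Fin d)
    (hdvd : (X ^ 2 - 1 : F[X]) ∣
      γp * ((-1) ^ ((Finset.univ.erase j).card) * X ^ ((Finset.univ.erase j).card)) - X) :
    ∑ k, ((γs (v k) + ρ * (v k ^ 2 - 1) * ∏ l ∈ Finset.univ.erase k, v l) *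
        ∏ l ∈ Finset.univ.erase k, (v k * v l - 1) / (v k - v l)) / (v j * v k - 1)
      = ρ + 1 / (v j ^ 2 - 1) := by
  classical
  have hd0 : 0 < d := j.pos
  set T := (univ : Finset (Fin d)).erase j with hT
  set n := T.card with hn
  have hnd : n + 1 = d := by
    rw [hn, hT, Finset.card_erase_of_mem (Finset.mem_univ j), Finset.card_univ,
      Fintype.card_fin]
    omega
  set w := v j with hwdef
  have hsq : ∀ k : Fin d, v k ^ 2 - 1 ≠ 0 := by
    intro k hc
    exact hv1 k k (by rw [← pow_two]; exact sub_eq_zero.mp hc)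
  have hw2 : w ^ 2 - 1 ≠ 0 := hsq j
  set f := (w ^ 2 - 1)⁻¹ with hf
  set V := ∏ l, v l with hV
  set E : F[X] := C (ρ + f) * X ^ 2 + C (w * f) * X + C (-ρ) with hE
  set MT : F[X] := ∏ l ∈ T, (X - C (v l)) with hMT
  set M : F[X] := ∏ l, (X - C (v l)) with hM
  set PT : F[X] := ∏ l ∈ T, (C (v l) * X - 1) with hPT
  set g : F[X] := (γp + C (ρ * V) * (X ^ 2 - 1)) * PT with hg
  have hMsplit : M = (X - C w) * MT :=
    (Finset.mul_prod_erase _ _ (Finset.mem_univ j)).symm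
  have hdvd2 : (X ^ 2 - 1 : F[X]) ∣ g + M * E := by
    have h1 := aux_prod_dvd T v
    have h2 : (X ^ 2 - 1 : F[X]) ∣ (X : F[X]) + (X - C w) * E :=
      ⟨_, aux_E w ρ hw2⟩
    have hss : ((-1 : F[X]) ^ n) * ((-1) ^ n) = 1 := by
      rw [← pow_add]; exact Even.neg_one_pow ⟨n, by omega⟩
    have key : g + M * E
        = (C (ρ * V) * PT) * (X ^ 2 - 1)
          + (-(γp * (-1) ^ n)) * (X ^ n * MT - (-1) ^ n * PT)
          + MT * (γp * ((-1) ^ n * X ^ n) - X)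
          + MT * ((X : F[X]) + (X - C w) * E) := by
      rw [hg, hMsplit]
      linear_combination (-(γp * PT)) * hss
    rw [key]
    exact dvd_add (dvd_add (dvd_add (dvd_mul_left _ _) (h1.mul_left _))
      (hdvd.mul_left _)) (h2.mul_left _)
  have hγ0 : γp.eval 0 = 0 := by rw [heval 0, mul_zero]
  have hdvdX : (X : F[X]) ∣ g + M * E := by
    rw [X_dvd_iff, coeff_zero_eq_eval_zero]
    have hPT0 : PT.eval 0 = (-1) ^ n := by
      rw [hPT, eval_prod]
      simp [hn]
    have hM0 : M.eval 0 = (-1) ^ d * V := by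
      rw [hM, eval_prod, hV]
      simp only [eval_sub, eval_X, eval_C, zero_sub]
      rw [show (∏ l, -v l) = ∏ l, (-1 : F) * v l by simp, Finset.prod_mul_distrib]
      simp
    have hE0 : E.eval 0 = -ρ := by simp [hE]
    rw [eval_add, hg, eval_mul, hPT0, eval_mul, hM0, hE0, eval_add, hγ0, eval_mul, eval_C]
    simp only [eval_sub, eval_pow, eval_X, eval_one]
    rw [← hnd, pow_succ]
    ring
  have hcop : IsCoprime (X : F[X]) (X ^ 2 - 1) := ⟨X, -1, by ring⟩
  obtain ⟨P, hP⟩ := hcop.mul_dvd hdvdX hdvd2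
  have hX2mon : (X ^ 2 - 1 : F[X]).Monic := by
    have : (X ^ 2 - 1 : F[X]) = X ^ 2 - C 1 := by rw [map_one]
    rw [this]
    exact monic_X_pow_sub_C 1 (by norm_num)
  have hXXmon : (X * (X ^ 2 - 1) : F[X]).Monic := monic_X.mul hX2mon
  have hXXdeg : (X * (X ^ 2 - 1) : F[X]).natDegree = 3 := by
    rw [natDegree_mul X_ne_zero hX2mon.ne_zero, natDegree_X]
    have : (X ^ 2 - 1 : F[X]) = X ^ 2 - C 1 := by rw [map_one]
    rw [this, natDegree_X_pow_sub_C]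
  have hMmon : M.Monic := monic_prod_of_monic _ _ fun _ _ => monic_X_sub_C _
  have hMdeg : M.natDegree = d := by
    rw [hM, natDegree_prod_of_monic _ _ fun _ _ => monic_X_sub_C _]
    simp
  have hPTdeg : PT.natDegree ≤ n := by
    refine le_trans (natDegree_prod_le _ _) ?_
    refine le_trans (Finset.sum_le_card_nsmul _ _ 1 fun l _ => ?_) (by simp [hn])
    have h1 : (C (v l) * X - 1 : F[X]) = C (v l) * X + C (-1) := by
      rw [map_neg, map_one]; ring
    rw [h1]
    exact natDegree_linear_le
  have hgdeg : g.natDegree ≤ d + 1 := by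
    rw [hg]
    refine le_trans (natDegree_mul_le) ?_
    have h1 : (γp + C (ρ * V) * (X ^ 2 - 1)).natDegree ≤ 2 := by
      refine le_trans (natDegree_add_le _ _) (max_le hdeg ?_)
      refine le_trans (natDegree_mul_le) ?_
      have : (X ^ 2 - 1 : F[X]) = X ^ 2 - C 1 := by rw [map_one]
      rw [natDegree_C, this, natDegree_X_pow_sub_C]
    omega
  have hEdeg : E.natDegree ≤ 2 := by rw [hE]; exact natDegree_quadratic_le
  have hsumdeg : (g + M * E).natDegree ≤ d + 2 := by
    refine le_trans (natDegree_add_le _ _) (max_le (by omega) ?_)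
    refine le_trans (natDegree_mul_le) (by omega)
  have hPdeg : P.natDegree ≤ n := by
    by_cases hP0 : P = 0
    · simp [hP0]
    · have h3 : (X * (X ^ 2 - 1) * P).natDegree = 3 + P.natDegree := by
        rw [natDegree_mul hXXmon.ne_zero hP0, hXXdeg]
      rw [hP, h3] at hsumdeg
      omega
  have hMcoeffd : M.coeff d = 1 := by
    rw [← hMdeg]; exact hMmon.coeff_natDegree
  have hcoeff : (g + M * E).coeff (d + 2) = ρ + f := by
    rw [coeff_add]
    have h0 : g.coeff (d + 2) = 0 :=
      coeff_eq_zero_of_natDegree_lt (lt_of_le_of_lt hgdeg (by omega))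
    have h1 : (M * E).coeff (d + 2) = ρ + f := by
      rw [hE, mul_add, mul_add, coeff_add, coeff_add]
      have t2 : (M * (C (ρ + f) * X ^ 2)).coeff (d + 2) = ρ + f := by
        rw [show M * (C (ρ + f) * X ^ 2) = C (ρ + f) * (M * X ^ 2) by ring, coeff_C_mul,
          coeff_mul_X_pow, hMcoeffd, mul_one]
      have t1 : (M * (C (w * f) * X)).coeff (d + 2) = 0 := by
        rw [show M * (C (w * f) * X) = C (w * f) * (M * X ^ 1) by ring, coeff_C_mul,
          show d + 2 = (d + 1) + 1 from rfl, coeff_mul_X_pow,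
          coeff_eq_zero_of_natDegree_lt (by omega), mul_zero]
      have t0 : (M * C (-ρ)).coeff (d + 2) = 0 := by
        rw [mul_comm, coeff_C_mul, coeff_eq_zero_of_natDegree_lt (by omega), mul_zero]
      rw [t2, t1, t0]
      ring
    rw [h0, h1, zero_add]
  have hPcoeff : P.coeff n = ρ + f := by
    have h2 : (X * (X ^ 2 - 1) * P).coeff (d + 2) = P.coeff n := by
      have hrw : X * (X ^ 2 - 1) * P = P * X ^ (3 : ℕ) - P * X ^ (1 : ℕ) := by ring
      rw [hrw, coeff_sub, show d + 2 = n + 3 by omega, coeff_mul_X_pow,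
        show n + 3 = (n + 2) + 1 by omega, coeff_mul_X_pow,
        coeff_eq_zero_of_natDegree_lt (show P.natDegree < n + 2 by omega), sub_zero]
    rw [← h2, ← hP, hcoeff]
  have hinj : Set.InjOn v ↑(univ : Finset (Fin d)) := hvinj.injOn
  have hdegP : P.degree < ((univ : Finset (Fin d)).card : ℕ) := by
    rw [Finset.card_univ, Fintype.card_fin]
    by_cases hP0 : P = 0
    · rw [hP0, degree_zero]
      exact_mod_cast WithBot.bot_lt_coe d
    · exact (natDegree_lt_iff_degree_lt hP0).mp (by omega)
  have hlag := lag_coeff hinj hdegP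
  rw [Finset.card_univ, Fintype.card_fin, show d - 1 = n by omega, hPcoeff] at hlag
  -- hlag : ρ + f = ∑ i, P.eval (v i) * (∏ l ∈ univ.erase i, (v i - v l))⁻¹
  have hPeval : ∀ k, P.eval (v k) = g.eval (v k) / (v k * (v k ^ 2 - 1)) := by
    intro k
    have hMk : M.eval (v k) = 0 := by
      rw [hM, eval_prod]
      exact Finset.prod_eq_zero (Finset.mem_univ k) (by simp)
    have hev := congrArg (eval (v k)) hP
    simp only [eval_add, eval_mul, eval_sub, eval_pow, eval_X, eval_one, hMk, zero_mul,
      add_zero] at hev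
    rw [eq_div_iff (mul_ne_zero (hv0 k) (hsq k))]
    linear_combination -hev
  have hgeval : ∀ k, g.eval (v k)
      = (γs (v k) * v k + ρ * V * (v k ^ 2 - 1)) * ∏ l ∈ T, (v k * v l - 1) := by
    intro k
    rw [hg, eval_mul, hPT, eval_prod]
    rw [Finset.prod_congr rfl
      (show ∀ l ∈ T, eval (v k) (C (v l) * X - 1) = v k * v l - 1 from fun l _ => by
        simp only [eval_sub, eval_mul, eval_C, eval_X, eval_one]; ring)]
    simp only [eval_add, eval_mul, eval_C, eval_sub, eval_pow, eval_X, eval_one, heval]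
    try ring
  have hterm : ∀ k, ((γs (v k) + ρ * (v k ^ 2 - 1) * ∏ l ∈ Finset.univ.erase k, v l) *
        ∏ l ∈ Finset.univ.erase k, (v k * v l - 1) / (v k - v l)) / (v j * v k - 1)
      = P.eval (v k) * (∏ l ∈ univ.erase k, (v k - v l))⁻¹ := by
    intro k
    have hVk : V = v k * ∏ l ∈ univ.erase k, v l :=
      (Finset.mul_prod_erase _ _ (Finset.mem_univ k)).symm
    have hprodkey : (∏ l ∈ univ.erase k, (v k * v l - 1)) * (v k * v k - 1)
        = (∏ l ∈ T, (v k * v l - 1)) * (v j * v k - 1) := by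
      by_cases hkj : k = j
      · subst hkj; rw [hT]
      · have hj' : j ∈ univ.erase k :=
          Finset.mem_erase.mpr ⟨fun h => hkj h.symm, Finset.mem_univ _⟩
        have hk' : k ∈ T := by
          rw [hT]; exact Finset.mem_erase.mpr ⟨hkj, Finset.mem_univ _⟩
        rw [← Finset.mul_prod_erase _ _ hj', ← Finset.mul_prod_erase _ _ hk', hT,
          Finset.erase_right_comm]
        ring
    have hBp : (∏ l ∈ univ.erase k, (v k - v l)) ≠ 0 := by
      rw [Finset.prod_ne_zero_iff]
      intro l hl
      rcases Finset.mem_erase.mp hl with ⟨hlk, _⟩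
      exact sub_ne_zero_of_ne fun h => hlk (hvinj h.symm)
    have hjk : v j * v k - 1 ≠ 0 := sub_ne_zero_of_ne (hv1 j k)
    rw [hPeval k, hgeval k, hVk, Finset.prod_div_distrib]
    have hkk : v k * v k - 1 ≠ 0 := sub_ne_zero_of_ne (hv1 k k)
    have hT' : (∏ l ∈ T, (v k * v l - 1))
        = (∏ l ∈ univ.erase k, (v k * v l - 1)) * (v k * v k - 1) / (v j * v k - 1) := by
      rw [eq_div_iff hjk]; exact hprodkey.symm
    rw [hT']
    field_simp [hv0 k, hsq k, hjk, hBp, hkk]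
  calc ∑ k, ((γs (v k) + ρ * (v k ^ 2 - 1) * ∏ l ∈ Finset.univ.erase k, v l) *
        ∏ l ∈ Finset.univ.erase k, (v k * v l - 1) / (v k - v l)) / (v j * v k - 1)
      = ∑ k, P.eval (v k) * (∏ l ∈ univ.erase k, (v k - v l))⁻¹ :=
        Finset.sum_congr rfl fun k _ => hterm k
    _ = ρ + f := hlag.symm
    _ = ρ + 1 / (v j ^ 2 - 1) := by rw [hf, one_div, hwdef]

/-- With `δ = q − q⁻¹`, pairwise distinct invertible `v₁,…,v_d` with
`vᵢvⱼ ≠ 1`, `ϱ⁻¹ = α·v₁⋯v_d` (`α ∈ {1,−1}` for odd `d`, `α ∈ {q⁻¹,−q}` for even `d`) and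
`γᵢ = (γ_d(vᵢ) + δ⁻¹ϱ(vᵢ² − 1)∏_{j≠i}vⱼ)·∏_{j≠i}(vᵢvⱼ − 1)/(vᵢ − vⱼ)`, one has, for every
`1 ≤ j ≤ d`:  `∑_{k=1}^d γ_k/(vⱼv_k − 1) = δ⁻¹ϱ + 1/(vⱼ² − 1)`. -/
theorem stmt_1 {F : Type*} [Field F] {d : ℕ} (hd : 1 ≤ d)
    (q ϱ α : F) (hq : q ≠ 0) (hδ : q - q⁻¹ ≠ 0) (hϱ : ϱ ≠ 0)
    (v : Fin d → F) (hv0 : ∀ i, v i ≠ 0) (hvinj : Function.Injective v)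
    (hv1 : ∀ i j, v i * v j ≠ 1)
    (hα : if Odd d then α = 1 ∨ α = -1 else α = q⁻¹ ∨ α = -q)
    (hϱα : ϱ⁻¹ = α * ∏ l, v l)
    (γ : Fin d → F)
    (hγ : ∀ i, γ i =
      ((if Odd d then 1 else -v i) +
          (q - q⁻¹)⁻¹ * ϱ * (v i ^ 2 - 1) * ∏ j ∈ Finset.univ.erase i, v j) *
        ∏ j ∈ Finset.univ.erase i, (v i * v j - 1) / (v i - v j)) :
    ∀ j, ∑ k, γ k / (v j * v k - 1) = (q - q⁻¹)⁻¹ * ϱ + 1 / (v j ^ 2 - 1) := by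
  intro j
  have hcd : (Finset.univ.erase j).card + 1 = d := by
    rw [Finset.card_erase_of_mem (Finset.mem_univ j), Finset.card_univ, Fintype.card_fin]
    omega
  rcases Nat.even_or_odd d with heven | hodd
  · -- even case
    have hnodd : Odd ((Finset.univ.erase j).card) := by
      have : Odd (d - 1) := Nat.Even.sub_odd hd heven odd_one
      have hcd' : (Finset.univ.erase j).card = d - 1 := by omega
      rwa [hcd']
    have hnotodd : ¬ Odd d := by simp [Nat.not_odd_iff_even.mpr heven]
    have hdvd : (X ^ 2 - 1 : F[X]) ∣
        (-X ^ 2 : F[X]) * ((-1) ^ ((Finset.univ.erase j).card)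
          * X ^ ((Finset.univ.erase j).card)) - X := by
      rw [hnodd.neg_one_pow]
      have h := aux_odd_pow (R := F) (k := (Finset.univ.erase j).card + 2)
        (hnodd.add_even even_two)
      have e : (-X ^ 2 : F[X]) * (-1 * X ^ ((Finset.univ.erase j).card)) - X
          = X ^ ((Finset.univ.erase j).card + 2) - X := by ring
      rw [e]
      exact h
    have hc := core ((q - q⁻¹)⁻¹ * ϱ) v hv0 hvinj hv1 (fun x => -x) (-X ^ 2)
      (by rw [natDegree_neg]; simp) (fun x => by simp; ring) j hdvd
    simp only [hγ, if_neg hnotodd]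
    exact hc
  · -- odd case
    have hneven : Even ((Finset.univ.erase j).card) := by
      have : Even (d - 1) := Nat.Odd.sub_odd hodd odd_one
      have hcd' : (Finset.univ.erase j).card = d - 1 := by omega
      rwa [hcd']
    have hdvd : (X ^ 2 - 1 : F[X]) ∣
        (X : F[X]) * ((-1) ^ ((Finset.univ.erase j).card)
          * X ^ ((Finset.univ.erase j).card)) - X := by
      rw [hneven.neg_one_pow]
      have h := aux_odd_pow (R := F) (k := (Finset.univ.erase j).card + 1) (by rwa [hcd])
      have e : (X : F[X]) * (1 * X ^ ((Finset.univ.erase j).card)) - X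
          = X ^ ((Finset.univ.erase j).card + 1) - X := by ring
      rw [e]
      exact h
    have hc := core ((q - q⁻¹)⁻¹ * ϱ) v hv0 hvinj hv1 (fun _ => (1 : F)) X
      (by simp) (fun x => by simp) j hdvd
    simp only [hγ, if_pos hodd]
    exact hc
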